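/- arXiv:math/0407050 — 2 statements merged into one kernel-verified Lean document; each statement's English description precedes it below -/
import Mathlib

section
/- For every positive integer n, the group with presentation ⟨a, b, c | a = b^n c b^{-n}, b = c^n a c^{-n}, c = a^n b a^{-n}⟩ (the n-th generalized knot group of the right-handed trefoil) is isomorphic to the group with presentation ⟨a, b, c | a = b^{-n} c b^{n}, b = c^{-n} a c^{n}, c = a^{-n} b a^{n}⟩ (the n-th generalized knot group of the left-handed trefoil). -/
/-- Relators of the n-th generalized knot group of the right-handed trefoil:
⟨a, b, c | a = bⁿ c b⁻ⁿ, b = cⁿ a c⁻ⁿ, c = aⁿ b a⁻ⁿ⟩, with a, b, c = 0, 1, 2. -/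
def trefoilRightRels (n : ℕ) : Set (FreeGroup (Fin 3)) :=
  let a : FreeGroup (Fin 3) := FreeGroup.of 0
  let b : FreeGroup (Fin 3) := FreeGroup.of 1
  let c : FreeGroup (Fin 3) := FreeGroup.of 2
  {a * (b ^ n * c * (b ^ n)⁻¹)⁻¹,
   b * (c ^ n * a * (c ^ n)⁻¹)⁻¹,
   c * (a ^ n * b * (a ^ n)⁻¹)⁻¹}

/-- Relators of the n-th generalized knot group of the left-handed trefoil:
⟨a, b, c | a = b⁻ⁿ c bⁿ, b = c⁻ⁿ a cⁿ, c = a⁻ⁿ b aⁿ⟩, with a, b, c = 0, 1, 2. -/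
def trefoilLeftRels (n : ℕ) : Set (FreeGroup (Fin 3)) :=
  let a : FreeGroup (Fin 3) := FreeGroup.of 0
  let b : FreeGroup (Fin 3) := FreeGroup.of 1
  let c : FreeGroup (Fin 3) := FreeGroup.of 2
  {a * ((b ^ n)⁻¹ * c * b ^ n)⁻¹,
   b * ((c ^ n)⁻¹ * a * c ^ n)⁻¹,
   c * ((a ^ n)⁻¹ * b * a ^ n)⁻¹}

lemma rel_one {α : Type*} {rels : Set (FreeGroup α)} {r : FreeGroup α} (h : r ∈ rels) :
    PresentedGroup.mk rels r = 1 :=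
  (QuotientGroup.eq_one_iff r).2 (Subgroup.subset_normalClosure h)

lemma lift_inv_gen_left {n : ℕ} : ∀ r ∈ trefoilRightRels n,
    FreeGroup.lift (fun i => (PresentedGroup.of (rels := trefoilLeftRels n) i)⁻¹) r = 1 := by
  intro r hr
  have h1 : PresentedGroup.of (rels := trefoilLeftRels n) 0 =
      (PresentedGroup.of 1 ^ n)⁻¹ * PresentedGroup.of 2 * PresentedGroup.of 1 ^ n := by
    have := rel_one (rels := trefoilLeftRels n)
      (r := FreeGroup.of 0 * ((FreeGroup.of 1 ^ n)⁻¹ * FreeGroup.of 2 * FreeGroup.of 1 ^ n)⁻¹)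
      (by simp [trefoilLeftRels])
    simp only [map_mul, map_inv, map_pow] at this
    exact mul_inv_eq_one.mp this
  have h2 : PresentedGroup.of (rels := trefoilLeftRels n) 1 =
      (PresentedGroup.of 2 ^ n)⁻¹ * PresentedGroup.of 0 * PresentedGroup.of 2 ^ n := by
    have := rel_one (rels := trefoilLeftRels n)
      (r := FreeGroup.of 1 * ((FreeGroup.of 2 ^ n)⁻¹ * FreeGroup.of 0 * FreeGroup.of 2 ^ n)⁻¹)
      (by simp [trefoilLeftRels])
    simp only [map_mul, map_inv, map_pow] at this
    exact mul_inv_eq_one.mp this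
  have h3 : PresentedGroup.of (rels := trefoilLeftRels n) 2 =
      (PresentedGroup.of 0 ^ n)⁻¹ * PresentedGroup.of 1 * PresentedGroup.of 0 ^ n := by
    have := rel_one (rels := trefoilLeftRels n)
      (r := FreeGroup.of 2 * ((FreeGroup.of 0 ^ n)⁻¹ * FreeGroup.of 1 * FreeGroup.of 0 ^ n)⁻¹)
      (by simp [trefoilLeftRels])
    simp only [map_mul, map_inv, map_pow] at this
    exact mul_inv_eq_one.mp this
  simp only [trefoilRightRels, Set.mem_insert_iff, Set.mem_singleton_iff] at hr
  rcases hr with h | h | h <;> subst h <;>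
      simp only [map_mul, map_inv, map_pow, FreeGroup.lift_apply_of, inv_pow, inv_inv,
        mul_inv_eq_one, eq_comm (b := _⁻¹), eq_inv_iff_mul_eq_one]
  · rw [h1]; group
  · rw [h2]; group
  · rw [h3]; group

lemma lift_inv_gen_right {n : ℕ} : ∀ r ∈ trefoilLeftRels n,
    FreeGroup.lift (fun i => (PresentedGroup.of (rels := trefoilRightRels n) i)⁻¹) r = 1 := by
  intro r hr
  have h1 : PresentedGroup.of (rels := trefoilRightRels n) 0 =
      PresentedGroup.of 1 ^ n * PresentedGroup.of 2 * (PresentedGroup.of 1 ^ n)⁻¹ := by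
    have := rel_one (rels := trefoilRightRels n)
      (r := FreeGroup.of 0 * (FreeGroup.of 1 ^ n * FreeGroup.of 2 * (FreeGroup.of 1 ^ n)⁻¹)⁻¹)
      (by simp [trefoilRightRels])
    simp only [map_mul, map_inv, map_pow] at this
    exact mul_inv_eq_one.mp this
  have h2 : PresentedGroup.of (rels := trefoilRightRels n) 1 =
      PresentedGroup.of 2 ^ n * PresentedGroup.of 0 * (PresentedGroup.of 2 ^ n)⁻¹ := by
    have := rel_one (rels := trefoilRightRels n)
      (r := FreeGroup.of 1 * (FreeGroup.of 2 ^ n * FreeGroup.of 0 * (FreeGroup.of 2 ^ n)⁻¹)⁻¹)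
      (by simp [trefoilRightRels])
    simp only [map_mul, map_inv, map_pow] at this
    exact mul_inv_eq_one.mp this
  have h3 : PresentedGroup.of (rels := trefoilRightRels n) 2 =
      PresentedGroup.of 0 ^ n * PresentedGroup.of 1 * (PresentedGroup.of 0 ^ n)⁻¹ := by
    have := rel_one (rels := trefoilRightRels n)
      (r := FreeGroup.of 2 * (FreeGroup.of 0 ^ n * FreeGroup.of 1 * (FreeGroup.of 0 ^ n)⁻¹)⁻¹)
      (by simp [trefoilRightRels])
    simp only [map_mul, map_inv, map_pow] at this
    exact mul_inv_eq_one.mp this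
  simp only [trefoilLeftRels, Set.mem_insert_iff, Set.mem_singleton_iff] at hr
  rcases hr with h | h | h <;> subst h <;>
      simp only [map_mul, map_inv, map_pow, FreeGroup.lift_apply_of, inv_pow, inv_inv,
        mul_inv_eq_one, eq_comm (b := _⁻¹), eq_inv_iff_mul_eq_one]
  · rw [h1]; group
  · rw [h2]; group
  · rw [h3]; group

theorem stmt_0 (n : ℕ) (hn : 0 < n) :
    Nonempty (PresentedGroup (trefoilRightRels n) ≃* PresentedGroup (trefoilLeftRels n)) := by
  refine ⟨MonoidHom.toMulEquiv (PresentedGroup.toGroup lift_inv_gen_left)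
    (PresentedGroup.toGroup lift_inv_gen_right) ?_ ?_⟩ <;>
  · apply PresentedGroup.ext
    intro x
    simp [PresentedGroup.toGroup.of]
end

section
/- Let G be a group, let b, d, e ∈ G, let n be a positive integer, and set D = d^n, B = b^n, E = e^n. Suppose b D B = D B d and e D E = D E d. Then the equation E D e D^{-1} E^{-1} = B D b D^{-1} B^{-1} holds in G if and only if (E D)^3 d (E D)^{-3} = (B D)^3 d (B D)^{-3}. -/
private lemma aux_stmt9 {G : Type*} [Group G] (x d D B : G) (n : ℕ)
    (hD : D = d ^ n) (hB : B = x ^ n) (h : x * D * B = D * B * d) :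
    (B * D) ^ 3 * d * ((B * D) ^ 3)⁻¹ = B * D * x * D⁻¹ * B⁻¹ := by
  have hdD : d * D = D * d := by rw [hD]; exact (Commute.self_pow d n)
  have hxB : x * B = B * x := by rw [hB]; exact (Commute.self_pow x n)
  have hd : x * (D * B) = (D * B) * d := by rw [← mul_assoc]; exact h
  have hcx : (D * B) * d * (D * B)⁻¹ = x := by
    rw [← hd]; group
  have hcd : D * d * D⁻¹ = d := by
    rw [show D * d = d * D from hdD.symm]; group
  have hcb : B * x * B⁻¹ = x := by
    rw [show B * x = x * B from hxB.symm]; group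
  calc (B * D) ^ 3 * d * ((B * D) ^ 3)⁻¹
      = B * (D * B) * ((D * B) * (D * d * D⁻¹) * (D * B)⁻¹) * (D * B)⁻¹ * B⁻¹ := by
        simp only [pow_succ, pow_zero, one_mul, mul_inv_rev]; group
    _ = B * (D * B) * ((D * B) * d * (D * B)⁻¹) * (D * B)⁻¹ * B⁻¹ := by rw [hcd]
    _ = B * (D * B) * x * (D * B)⁻¹ * B⁻¹ := by rw [hcx]
    _ = B * D * (B * x * B⁻¹) * D⁻¹ * B⁻¹ := by group
    _ = B * D * x * D⁻¹ * B⁻¹ := by rw [hcb]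

theorem stmt_9 {G : Type*} [Group G] (b d e : G) (n : ℕ) (hn : 0 < n)
    (D B E : G) (hD : D = d ^ n) (hB : B = b ^ n) (hE : E = e ^ n)
    (h1 : b * D * B = D * B * d) (h2 : e * D * E = D * E * d) :
    E * D * e * D⁻¹ * E⁻¹ = B * D * b * D⁻¹ * B⁻¹ ↔
      (E * D) ^ 3 * d * ((E * D) ^ 3)⁻¹ = (B * D) ^ 3 * d * ((B * D) ^ 3)⁻¹ := by
  rw [aux_stmt9 b d D B n hD hB h1, aux_stmt9 e d D E n hD hE h2]
end
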